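/- Let d be a positive integer, p an odd prime with p ∤ d, and n ∈ {1, 2, 3}. Then N(d·p^{2n}) ≤ 5103 · N(d), where for a positive integer m, N(m) := 3·4^{Ω(m)}/16 + 2·3^{Ω(m)}/32 + 2^{Ω(m)}/72 + 3·2^{Ω(m)}/96 + 53/5760 + Σ_{x | m} (2·3^{Ω(x)}/8 + 2^{Ω(x)}/16 + 1/24) + Σ_{x | m} (1/4)·(2·2^{Ω(x)}/4 + 5/24)·(2·2^{Ω(m/x)}/4 + 5/24). -/

import Mathlib

open Real Finset

/-- The extended bound `Nref(m)` for the reflective part of the mass of a (not necessarily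
strongly square free) quaternary lattice of determinant `m` (section 4.2); `Ω` is realised
by `Nat.primeFactorsList.length`. -/
noncomputable def NrefExt (m : ℕ) : ℝ :=
  3 * (4 : ℝ) ^ m.primeFactorsList.length / 16 +
    2 * (3 : ℝ) ^ m.primeFactorsList.length / 32 +
    (2 : ℝ) ^ m.primeFactorsList.length / 72 +
    3 * (2 : ℝ) ^ m.primeFactorsList.length / 96 + 53 / 5760 +
    (∑ x ∈ m.divisors,
      (2 * (3 : ℝ) ^ x.primeFactorsList.length / 8 +
        (2 : ℝ) ^ x.primeFactorsList.length / 16 + 1 / 24)) +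
    ∑ x ∈ m.divisors,
      (1 / 4) * (2 * (2 : ℝ) ^ x.primeFactorsList.length / 4 + 5 / 24) *
        (2 * (2 : ℝ) ^ (m / x).primeFactorsList.length / 4 + 5 / 24)

private lemma omega_mul {a b : ℕ} (ha : a ≠ 0) (hb : b ≠ 0) :
    (a * b).primeFactorsList.length
      = a.primeFactorsList.length + b.primeFactorsList.length := by
  rw [(Nat.perm_primeFactorsList_mul ha hb).length_eq, List.length_append]

private lemma omega_pow {p : ℕ} (hp : p.Prime) (k : ℕ) :
    (p ^ k).primeFactorsList.length = k := by
  rw [hp.primeFactorsList_pow, List.length_replicate]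

private lemma sum_div_decomp {d p : ℕ} (hd : d ≠ 0) (hp : p.Prime) (hpd : ¬ p ∣ d)
    (N : ℕ) (f : ℕ → ℕ → ℝ) :
    ∑ x ∈ (d * p ^ N).divisors,
        f x.primeFactorsList.length (d * p ^ N / x).primeFactorsList.length
      = ∑ y ∈ d.divisors, ∑ j ∈ Finset.range (N + 1),
          f (y.primeFactorsList.length + j) ((d / y).primeFactorsList.length + (N - j)) := by
  have hp0 : p ≠ 0 := hp.pos.ne'
  have hm : d * p ^ N ≠ 0 := mul_ne_zero hd (pow_ne_zero _ hp0)
  rw [← Finset.sum_product']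
  refine (Finset.sum_nbij' (fun x => (x / p ^ (x.factorization p), x.factorization p))
    (fun y => y.1 * p ^ y.2) ?_ ?_ ?_ ?_ ?_).symm |>.symm
  · -- hi
    intro x hx
    obtain ⟨hxd, -⟩ := Nat.mem_divisors.mp hx
    have hx0 : x ≠ 0 := ne_of_gt (Nat.pos_of_mem_divisors hx)
    have hyd : x / p ^ (x.factorization p) ∣ d := by
      have h1 : x / p ^ (x.factorization p) ∣ d * p ^ N :=
        (Nat.ordCompl_dvd x p).trans hxd
      have hpy : ¬ p ∣ x / p ^ (x.factorization p) := Nat.not_dvd_ordCompl hp hx0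
      exact (Nat.Coprime.pow_right N
        ((hp.coprime_iff_not_dvd.mpr hpy).symm)).dvd_of_dvd_mul_right h1
    have hvN : x.factorization p ≤ N := by
      have h1 : p ^ (x.factorization p) ∣ d * p ^ N := (Nat.ordProj_dvd x p).trans hxd
      have h2 : p ^ (x.factorization p) ∣ p ^ N := by
        have hcop : Nat.Coprime (p ^ (x.factorization p)) d :=
          Nat.Coprime.pow_left _ (hp.coprime_iff_not_dvd.mpr hpd)
        exact hcop.dvd_of_dvd_mul_left h1
      exact (Nat.pow_dvd_pow_iff_le_right hp.one_lt).mp h2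
    simp only [Finset.mem_product, Nat.mem_divisors, Finset.mem_range]
    exact ⟨⟨hyd, hd⟩, Nat.lt_succ_of_le hvN⟩
  · -- hj
    rintro ⟨y, j⟩ hyj
    simp only [Finset.mem_product, Nat.mem_divisors, Finset.mem_range] at hyj
    obtain ⟨⟨hyd, -⟩, hj⟩ := hyj
    exact Nat.mem_divisors.mpr ⟨mul_dvd_mul hyd (pow_dvd_pow p (Nat.lt_succ_iff.mp hj)), hm⟩
  · -- left_inv
    intro x hx
    have hx0 : x ≠ 0 := ne_of_gt (Nat.pos_of_mem_divisors hx)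
    dsimp only
    rw [mul_comm]
    exact Nat.ordProj_mul_ordCompl_eq_self x p
  · -- right_inv
    rintro ⟨y, j⟩ hyj
    simp only [Finset.mem_product, Nat.mem_divisors, Finset.mem_range] at hyj
    obtain ⟨⟨hyd, -⟩, hj⟩ := hyj
    have hy0 : y ≠ 0 := fun h => hd (by simpa [h] using hyd)
    have hpy : ¬ p ∣ y := fun h => hpd (h.trans hyd)
    have hfact : (y * p ^ j).factorization p = j := by
      rw [Nat.factorization_mul hy0 (pow_ne_zero _ hp0)]
      simp [Nat.factorization_eq_zero_of_not_dvd hpy, hp.factorization_pow]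
    simp only [hfact]
    rw [Nat.mul_div_cancel _ (pow_pos hp.pos j)]
  · -- h
    intro x hx
    obtain ⟨hxd, -⟩ := Nat.mem_divisors.mp hx
    have hx0 : x ≠ 0 := ne_of_gt (Nat.pos_of_mem_divisors hx)
    set v := x.factorization p with hv
    set y := x / p ^ v with hy
    have hxy : x = y * p ^ v := by
      rw [hy, mul_comm]; exact (Nat.ordProj_mul_ordCompl_eq_self x p).symm
    have hy0 : y ≠ 0 := by
      intro h; rw [hxy, h, zero_mul] at hx0; exact hx0 rfl
    have hpy : ¬ p ∣ y := Nat.not_dvd_ordCompl hp hx0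
    have hyd : y ∣ d := by
      have h1 : y ∣ d * p ^ N := (Nat.ordCompl_dvd x p).trans hxd
      exact (Nat.Coprime.pow_right N
        ((hp.coprime_iff_not_dvd.mpr hpy).symm)).dvd_of_dvd_mul_right h1
    have hvN : v ≤ N := by
      have h1 : p ^ v ∣ d * p ^ N := (Nat.ordProj_dvd x p).trans hxd
      have hcop : Nat.Coprime (p ^ v) d :=
        Nat.Coprime.pow_left _ (hp.coprime_iff_not_dvd.mpr hpd)
      exact (Nat.pow_dvd_pow_iff_le_right hp.one_lt).mp (hcop.dvd_of_dvd_mul_left h1)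
    have hdiv : d * p ^ N / x = (d / y) * p ^ (N - v) := by
      rw [hxy, ← Nat.div_mul_div_comm hyd (pow_dvd_pow p hvN),
        Nat.pow_div hvN hp.pos]
    dsimp only
    have hdy0 : d / y ≠ 0 := (Nat.div_ne_zero_iff_of_dvd hyd).mpr ⟨hd, hy0⟩
    have hfact : (y * p ^ v).factorization p = v := by
      rw [Nat.factorization_mul hy0 (pow_ne_zero _ hp0)]
      simp [Nat.factorization_eq_zero_of_not_dvd hpy, hp.factorization_pow]
    rw [hdiv, hxy,
      omega_mul hy0 (pow_ne_zero _ hp0), omega_pow hp,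
      omega_mul hdy0 (pow_ne_zero _ hp0), omega_pow hp]


private lemma aux1 (t j : ℕ) (hj : j ≤ 6) :
    2 * (3:ℝ) ^ (t + j) / 8 + (2:ℝ) ^ (t + j) / 16 + 1 / 24
      ≤ 729 * (2 * (3:ℝ) ^ t / 8 + (2:ℝ) ^ t / 16 + 1 / 24) := by
  have h3 : (3:ℝ) ^ j ≤ 729 := by
    calc (3:ℝ) ^ j ≤ 3 ^ 6 := pow_le_pow_right₀ (by norm_num) hj
    _ = 729 := by norm_num
  have h2 : (2:ℝ) ^ j ≤ 729 :=
    le_trans (pow_le_pow_left₀ (by norm_num) (by norm_num : (2:ℝ) ≤ 3) j) h3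
  have h3t : (0:ℝ) ≤ 3 ^ t := by positivity
  have h2t : (0:ℝ) ≤ 2 ^ t := by positivity
  rw [pow_add, pow_add]
  nlinarith [mul_le_mul_of_nonneg_left h3 h3t, mul_le_mul_of_nonneg_left h2 h2t]

private lemma aux2 (s t j k : ℕ) (hjk : j + k ≤ 6) :
    1 / 4 * (2 * (2:ℝ) ^ (s + j) / 4 + 5 / 24) * (2 * (2:ℝ) ^ (t + k) / 4 + 5 / 24)
      ≤ 64 * (1 / 4 * (2 * (2:ℝ) ^ s / 4 + 5 / 24) * (2 * (2:ℝ) ^ t / 4 + 5 / 24)) := by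
  have hP : (2:ℝ) ^ j * (2:ℝ) ^ k ≤ 64 := by
    rw [← pow_add]
    calc (2:ℝ) ^ (j + k) ≤ 2 ^ 6 := pow_le_pow_right₀ (by norm_num) hjk
    _ = 64 := by norm_num
  have h2j : (2:ℝ) ^ j ≤ 64 := by
    calc (2:ℝ) ^ j ≤ 2 ^ (j + k) := pow_le_pow_right₀ (by norm_num) (Nat.le_add_right _ _)
    _ ≤ 2 ^ 6 := pow_le_pow_right₀ (by norm_num) hjk
    _ = 64 := by norm_num
  have h2k : (2:ℝ) ^ k ≤ 64 := by
    calc (2:ℝ) ^ k ≤ 2 ^ (j + k) := pow_le_pow_right₀ (by norm_num) (Nat.le_add_left _ _)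
    _ ≤ 2 ^ 6 := pow_le_pow_right₀ (by norm_num) hjk
    _ = 64 := by norm_num
  have hs : (0:ℝ) ≤ 2 ^ s := by positivity
  have ht : (0:ℝ) ≤ 2 ^ t := by positivity
  rw [pow_add, pow_add]
  nlinarith [mul_le_mul_of_nonneg_left hP (mul_nonneg hs ht),
    mul_le_mul_of_nonneg_left h2j hs, mul_le_mul_of_nonneg_left h2k ht]


set_option maxHeartbeats 1000000 in
/-- The numerical content of Lemma 4.7(b): if `p` is an odd prime not dividing `d` and
`n ∈ {1, 2, 3}`, then `Nref(d·p^{2n}) ≤ 5103 · Nref(d)`. -/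
theorem nref_ext_watson_bound (d : ℕ) (hd : 0 < d) (p : ℕ) (hp : p.Prime) (hp2 : p ≠ 2)
    (hpd : ¬ p ∣ d) (n : ℕ) (hn : n = 1 ∨ n = 2 ∨ n = 3) :
    NrefExt (d * p ^ (2 * n)) ≤ 5103 * NrefExt d := by
  have hd0 : d ≠ 0 := hd.ne'
  have hp0 : p ≠ 0 := hp.pos.ne'
  have hN6 : 2 * n ≤ 6 := by omega
  have hN7 : ((2 * n : ℕ) : ℝ) + 1 ≤ 7 := by
    have : (2 * n : ℕ) ≤ 6 := hN6
    exact_mod_cast by omega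
  have hΩ : (d * p ^ (2 * n)).primeFactorsList.length
      = d.primeFactorsList.length + 2 * n := by
    rw [omega_mul hd0 (pow_ne_zero _ hp0), omega_pow hp]
  have e1 : ∑ x ∈ (d * p ^ (2 * n)).divisors,
        (2 * (3:ℝ) ^ x.primeFactorsList.length / 8 +
          (2:ℝ) ^ x.primeFactorsList.length / 16 + 1 / 24)
      = ∑ y ∈ d.divisors, ∑ j ∈ Finset.range (2 * n + 1),
          (2 * (3:ℝ) ^ (y.primeFactorsList.length + j) / 8 +
            (2:ℝ) ^ (y.primeFactorsList.length + j) / 16 + 1 / 24) :=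
    sum_div_decomp hd0 hp hpd (2 * n)
      (fun a _ => 2 * (3:ℝ) ^ a / 8 + (2:ℝ) ^ a / 16 + 1 / 24)
  have e2 : ∑ x ∈ (d * p ^ (2 * n)).divisors,
        (1 / 4 * (2 * (2:ℝ) ^ x.primeFactorsList.length / 4 + 5 / 24) *
          (2 * (2:ℝ) ^ (d * p ^ (2 * n) / x).primeFactorsList.length / 4 + 5 / 24))
      = ∑ y ∈ d.divisors, ∑ j ∈ Finset.range (2 * n + 1),
          (1 / 4 * (2 * (2:ℝ) ^ (y.primeFactorsList.length + j) / 4 + 5 / 24) *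
            (2 * (2:ℝ) ^ ((d / y).primeFactorsList.length + (2 * n - j)) / 4 + 5 / 24)) :=
    sum_div_decomp hd0 hp hpd (2 * n)
      (fun a b => 1 / 4 * (2 * (2:ℝ) ^ a / 4 + 5 / 24) * (2 * (2:ℝ) ^ b / 4 + 5 / 24))
  unfold NrefExt
  rw [e1, e2, hΩ]
  set A := d.primeFactorsList.length with hA
  -- head terms
  have h4A : (0:ℝ) ≤ 4 ^ A := by positivity
  have h3A : (0:ℝ) ≤ 3 ^ A := by positivity
  have h2A : (0:ℝ) ≤ 2 ^ A := by positivity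
  have h1 : 3 * (4:ℝ) ^ (A + 2 * n) / 16 ≤ 5103 * (3 * (4:ℝ) ^ A / 16) := by
    rw [pow_add]
    have h4 : (4:ℝ) ^ (2 * n) ≤ 5103 := by
      calc (4:ℝ) ^ (2 * n) ≤ 4 ^ 6 := pow_le_pow_right₀ (by norm_num) hN6
      _ ≤ 5103 := by norm_num
    nlinarith [mul_le_mul_of_nonneg_left h4 h4A]
  have h2 : 2 * (3:ℝ) ^ (A + 2 * n) / 32 ≤ 5103 * (2 * (3:ℝ) ^ A / 32) := by
    rw [pow_add]
    have h3 : (3:ℝ) ^ (2 * n) ≤ 5103 := by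
      calc (3:ℝ) ^ (2 * n) ≤ 3 ^ 6 := pow_le_pow_right₀ (by norm_num) hN6
      _ ≤ 5103 := by norm_num
    nlinarith [mul_le_mul_of_nonneg_left h3 h3A]
  have h2small : (2:ℝ) ^ (2 * n) ≤ 5103 := by
    calc (2:ℝ) ^ (2 * n) ≤ 2 ^ 6 := pow_le_pow_right₀ (by norm_num) hN6
    _ ≤ 5103 := by norm_num
  have h3 : (2:ℝ) ^ (A + 2 * n) / 72 ≤ 5103 * ((2:ℝ) ^ A / 72) := by
    rw [pow_add]
    nlinarith [mul_le_mul_of_nonneg_left h2small h2A]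
  have h4 : 3 * (2:ℝ) ^ (A + 2 * n) / 96 ≤ 5103 * (3 * (2:ℝ) ^ A / 96) := by
    rw [pow_add]
    nlinarith [mul_le_mul_of_nonneg_left h2small h2A]
  have h5 : (53:ℝ) / 5760 ≤ 5103 * (53 / 5760) := by norm_num
  -- first divisor sum
  have h6 : ∑ y ∈ d.divisors, ∑ j ∈ Finset.range (2 * n + 1),
        (2 * (3:ℝ) ^ (y.primeFactorsList.length + j) / 8 +
          (2:ℝ) ^ (y.primeFactorsList.length + j) / 16 + 1 / 24)
      ≤ 5103 * ∑ y ∈ d.divisors,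
          (2 * (3:ℝ) ^ y.primeFactorsList.length / 8 +
            (2:ℝ) ^ y.primeFactorsList.length / 16 + 1 / 24) := by
    rw [Finset.mul_sum]
    refine Finset.sum_le_sum fun y _ => ?_
    set t := y.primeFactorsList.length
    have hbase : (0:ℝ) ≤ 2 * (3:ℝ) ^ t / 8 + (2:ℝ) ^ t / 16 + 1 / 24 := by positivity
    calc ∑ j ∈ Finset.range (2 * n + 1),
          (2 * (3:ℝ) ^ (t + j) / 8 + (2:ℝ) ^ (t + j) / 16 + 1 / 24)
        ≤ ∑ _j ∈ Finset.range (2 * n + 1),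
            729 * (2 * (3:ℝ) ^ t / 8 + (2:ℝ) ^ t / 16 + 1 / 24) :=
          Finset.sum_le_sum fun j hj =>
            aux1 t j (by have := Finset.mem_range.mp hj; omega)
      _ = ((2 * n + 1 : ℕ) : ℝ) *
            (729 * (2 * (3:ℝ) ^ t / 8 + (2:ℝ) ^ t / 16 + 1 / 24)) := by
          rw [Finset.sum_const, Finset.card_range, nsmul_eq_mul]
      _ ≤ 7 * (729 * (2 * (3:ℝ) ^ t / 8 + (2:ℝ) ^ t / 16 + 1 / 24)) := by
          have hc : ((2 * n + 1 : ℕ) : ℝ) ≤ 7 := by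
            exact_mod_cast (by omega : 2 * n + 1 ≤ 7)
          nlinarith [hbase]
      _ = 5103 * (2 * (3:ℝ) ^ t / 8 + (2:ℝ) ^ t / 16 + 1 / 24) := by ring
  -- second divisor sum
  have h7 : ∑ y ∈ d.divisors, ∑ j ∈ Finset.range (2 * n + 1),
        (1 / 4 * (2 * (2:ℝ) ^ (y.primeFactorsList.length + j) / 4 + 5 / 24) *
          (2 * (2:ℝ) ^ ((d / y).primeFactorsList.length + (2 * n - j)) / 4 + 5 / 24))
      ≤ 5103 * ∑ y ∈ d.divisors,
          (1 / 4 * (2 * (2:ℝ) ^ y.primeFactorsList.length / 4 + 5 / 24) *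
            (2 * (2:ℝ) ^ (d / y).primeFactorsList.length / 4 + 5 / 24)) := by
    rw [Finset.mul_sum]
    refine Finset.sum_le_sum fun y _ => ?_
    set s := y.primeFactorsList.length
    set t := (d / y).primeFactorsList.length
    have hbase : (0:ℝ) ≤ 1 / 4 * (2 * (2:ℝ) ^ s / 4 + 5 / 24) *
        (2 * (2:ℝ) ^ t / 4 + 5 / 24) := by positivity
    calc ∑ j ∈ Finset.range (2 * n + 1),
          (1 / 4 * (2 * (2:ℝ) ^ (s + j) / 4 + 5 / 24) *
            (2 * (2:ℝ) ^ (t + (2 * n - j)) / 4 + 5 / 24))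
        ≤ ∑ _j ∈ Finset.range (2 * n + 1),
            64 * (1 / 4 * (2 * (2:ℝ) ^ s / 4 + 5 / 24) *
              (2 * (2:ℝ) ^ t / 4 + 5 / 24)) :=
          Finset.sum_le_sum fun j hj =>
            aux2 s t j (2 * n - j) (by have := Finset.mem_range.mp hj; omega)
      _ = ((2 * n + 1 : ℕ) : ℝ) * (64 * (1 / 4 * (2 * (2:ℝ) ^ s / 4 + 5 / 24) *
            (2 * (2:ℝ) ^ t / 4 + 5 / 24))) := by
          rw [Finset.sum_const, Finset.card_range, nsmul_eq_mul]
      _ ≤ 7 * (64 * (1 / 4 * (2 * (2:ℝ) ^ s / 4 + 5 / 24) *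
            (2 * (2:ℝ) ^ t / 4 + 5 / 24))) := by
          have hc : ((2 * n + 1 : ℕ) : ℝ) ≤ 7 := by
            exact_mod_cast (by omega : 2 * n + 1 ≤ 7)
          nlinarith [hbase]
      _ ≤ 5103 * (1 / 4 * (2 * (2:ℝ) ^ s / 4 + 5 / 24) *
            (2 * (2:ℝ) ^ t / 4 + 5 / 24)) := by nlinarith [hbase]
  linarith [h1, h2, h3, h4, h5, h6, h7]
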